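/- Let z = (z_1,…,z_n) ∈ ℝ^n be strictly decreasing (z_1 > z_2 > ⋯ > z_n), and let φ_z be the map sending an n×n real matrix X to the row vector zX ∈ ℝ^n. Then the image of ASM_n under φ_z equals the permutohedron P_z, the convex hull of the n! vectors (z_{ω(1)},…,z_{ω(n)}) over all permutations ω of {1,…,n}. -/

import Mathlib

open scoped BigOperators

/-- The nonzero entries of the vector `v` alternate in sign: any two nonzero
entries with only zeros strictly between them have opposite values. -/
def AlternatesSign {n : ℕ} (v : Fin n → ℝ) : Prop :=
  ∀ j₁ j₂ : Fin n, j₁ < j₂ → v j₁ ≠ 0 → v j₂ ≠ 0 →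
    (∀ k : Fin n, j₁ < k → k < j₂ → v k = 0) → v j₂ = -v j₁

/-- `A` is an `n × n` alternating sign matrix: entries in `{0, 1, -1}`, each row
and column sums to `1`, and the nonzero entries of each row and column
alternate in sign. -/
def IsASM (n : ℕ) (A : Matrix (Fin n) (Fin n) ℝ) : Prop :=
  (∀ i j, A i j = 0 ∨ A i j = 1 ∨ A i j = -1) ∧
  (∀ i, ∑ j, A i j = 1) ∧
  (∀ j, ∑ i, A i j = 1) ∧
  (∀ i, AlternatesSign (fun j => A i j)) ∧
  (∀ j, AlternatesSign (fun i => A i j))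

/-- The alternating sign matrix polytope: the convex hull of the ASMs. -/
def ASMPolytope (n : ℕ) : Set (Matrix (Fin n) (Fin n) ℝ) :=
  convexHull ℝ {A : Matrix (Fin n) (Fin n) ℝ | IsASM n A}

/-- The permutation matrix of `ω`, with a `1` in position `(i, ω i)`. -/
def permMatrix (n : ℕ) (ω : Equiv.Perm (Fin n)) : Matrix (Fin n) (Fin n) ℝ :=
  fun i j => if ω i = j then 1 else 0

/-- The Birkhoff polytope: the convex hull of the `n × n` permutation
matrices. -/
def BirkhoffPolytope (n : ℕ) : Set (Matrix (Fin n) (Fin n) ℝ) :=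
  convexHull ℝ {M : Matrix (Fin n) (Fin n) ℝ | ∃ ω : Equiv.Perm (Fin n), M = permMatrix n ω}

/-- The permutohedron `P_z`: the convex hull of all permutations of the
entries of `z`. -/
def permutohedron (n : ℕ) (z : Fin n → ℝ) : Set (Fin n → ℝ) :=
  convexHull ℝ {v : Fin n → ℝ | ∃ ω : Equiv.Perm (Fin n), v = z ∘ ω}

/-- The projection `φ_z`, sending a matrix `X` to the row vector `z X`. -/
def phiMap (n : ℕ) (z : Fin n → ℝ) (X : Matrix (Fin n) (Fin n) ℝ) : Fin n → ℝ :=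
  fun j => ∑ i, z i * X i j

open Finset

def ext0 {n : ℕ} (v : Fin n → ℝ) : ℕ → ℝ := fun i => if h : i < n then v ⟨i, h⟩ else 0

lemma ext0_lt {n : ℕ} (v : Fin n → ℝ) {i : ℕ} (h : i < n) : ext0 v i = v ⟨i, h⟩ := by
  simp [ext0, h]

lemma prefix_struct {n : ℕ} (v : Fin n → ℝ) (halt : AlternatesSign v) :
    ∀ k, k ≤ n →
      ((∀ i : Fin n, i.val < k → v i = 0) ∧ ∑ i ∈ range k, ext0 v i = 0) ∨
      (∃ i₁ i₂ : Fin n, i₁.val < k ∧ i₂.val < k ∧ v i₁ ≠ 0 ∧ v i₂ ≠ 0 ∧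
        (∀ i : Fin n, i < i₁ → v i = 0) ∧ (∀ i : Fin n, i₂ < i → i.val < k → v i = 0) ∧
        ∑ i ∈ range k, ext0 v i = (v i₁ + v i₂) / 2) := by
  intro k
  induction k with
  | zero => intro _; left; constructor
            · intro i hi; omega
            · simp
  | succ k ih =>
    intro hk
    have hkn : k < n := hk
    have ih' := ih (le_of_lt hkn)
    have hsum : ∑ i ∈ range (k+1), ext0 v i = (∑ i ∈ range k, ext0 v i) + v ⟨k, hkn⟩ := by
      rw [Finset.sum_range_succ, ext0_lt v hkn]
    by_cases ha : v ⟨k, hkn⟩ = 0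
    · rcases ih' with ⟨h1, h2⟩ | ⟨i₁, i₂, h1, h2, h3, h4, h5, h6, h7⟩
      · left; constructor
        · intro i hi
          by_cases hik : i.val < k
          · exact h1 i hik
          · have : i = ⟨k, hkn⟩ := by
              apply Fin.ext; simp only [Fin.val_mk]; omega
            rw [this]; exact ha
        · rw [hsum, h2, ha, add_zero]
      · right
        refine ⟨i₁, i₂, by omega, by omega, h3, h4, h5, ?_, ?_⟩
        · intro i hi hik
          by_cases hik' : i.val < k
          · exact h6 i hi hik'
          · have : i = ⟨k, hkn⟩ := by apply Fin.ext; simp only [Fin.val_mk]; omega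
            rw [this]; exact ha
        · rw [hsum, h7, ha, add_zero]
    · rcases ih' with ⟨h1, h2⟩ | ⟨i₁, i₂, h1, h2, h3, h4, h5, h6, h7⟩
      · right
        refine ⟨⟨k, hkn⟩, ⟨k, hkn⟩, by simp only [Fin.val_mk]; omega, by simp only [Fin.val_mk]; omega, ha, ha, ?_, ?_, ?_⟩
        · intro i hi
          exact h1 i (by exact_mod_cast hi)
        · intro i hi hik
          have h1' : (i : ℕ) < k + 1 := hik
          have h2' : (k : ℕ) < (i : ℕ) := by simpa [Fin.lt_def] using hi
          omega
        · rw [hsum, h2, zero_add]; ring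
      · right
        have hlt : i₂ < ⟨k, hkn⟩ := by
          rw [Fin.lt_def]; exact h2
        have halt' : v ⟨k, hkn⟩ = -v i₂ := by
          apply halt i₂ ⟨k, hkn⟩ hlt h4 ha
          intro j hj1 hj2
          exact h6 j hj1 (by exact_mod_cast hj2)
        refine ⟨i₁, ⟨k, hkn⟩, by omega, by simp only [Fin.val_mk]; omega, h3, ha, h5, ?_, ?_⟩
        · intro i hi hik
          have h2' : (k : ℕ) < (i : ℕ) := by simpa [Fin.lt_def] using hi
          omega
        · rw [hsum, h7, halt']; ring

lemma prefix_mem {n : ℕ} (v : Fin n → ℝ) (hv : ∀ i, v i = 0 ∨ v i = 1 ∨ v i = -1)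
    (halt : AlternatesSign v) (hsum : ∑ i, v i = 1) :
    ∀ k, k ≤ n → 0 ≤ ∑ i ∈ range k, ext0 v i ∧ ∑ i ∈ range k, ext0 v i ≤ 1 := by
  have htot : ∑ i ∈ range n, ext0 v i = 1 := by
    rw [← hsum, ← Fin.sum_univ_eq_sum_range]
    apply Finset.sum_congr rfl
    intro i _
    exact ext0_lt v i.isLt
  obtain ⟨i₁, i₂, _, _, hne1, hne2, hfirst, _, hval⟩ :
      ∃ i₁ i₂ : Fin n, i₁.val < n ∧ i₂.val < n ∧ v i₁ ≠ 0 ∧ v i₂ ≠ 0 ∧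
        (∀ i : Fin n, i < i₁ → v i = 0) ∧ (∀ i : Fin n, i₂ < i → i.val < n → v i = 0) ∧
        ∑ i ∈ range n, ext0 v i = (v i₁ + v i₂) / 2 := by
    rcases prefix_struct v halt n le_rfl with ⟨_, h2⟩ | h
    · rw [htot] at h2; norm_num at h2
    · exact h
  have hone : v i₁ = 1 := by
    rw [htot] at hval
    rcases hv i₁ with h | h | h <;> rcases hv i₂ with h' | h' | h' <;>
      first | (exact absurd h hne1) | (exact absurd h' hne2) | exact h | (rw [h, h'] at hval; norm_num at hval)
  intro k hk
  rcases prefix_struct v halt k hk with ⟨_, h2⟩ | ⟨j₁, j₂, _, _, hj1, hj2, hjfirst, _, hjval⟩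
  · rw [h2]; norm_num
  · have : j₁ = i₁ := by
      rcases lt_trichotomy j₁ i₁ with h | h | h
      · exact absurd (hfirst j₁ h) hj1
      · exact h
      · exact absurd (hjfirst i₁ h) (by rw [hone]; norm_num)
    rw [hjval, this, hone]
    rcases hv j₂ with h' | h' | h'
    · exact absurd h' hj2
    · rw [h']; norm_num
    · rw [h']; norm_num

lemma card_filter_val_lt (n k : ℕ) (hk : k ≤ n) :
    (univ.filter (fun m : Fin n => (m : ℕ) < k)).card = k := by
  have : univ.filter (fun m : Fin n => (m : ℕ) < k) =
      Finset.map (Fin.castLEEmb hk) univ := by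
    ext m
    simp only [mem_filter, mem_univ, true_and, Finset.mem_map]
    constructor
    · intro h
      exact ⟨⟨m, h⟩, by ext; simp⟩
    · rintro ⟨a, rfl⟩
      simpa using a.isLt
    
  rw [this, Finset.card_map, Finset.card_univ, Fintype.card_fin]

lemma sum_mul_le_topk {n k : ℕ} (hk : k ≤ n) (c t : Fin n → ℝ) (σ : Equiv.Perm (Fin n))
    (hσ : Antitone (c ∘ σ)) (ht0 : ∀ j, 0 ≤ t j) (ht1 : ∀ j, t j ≤ 1)
    (hts : ∑ j, t j = k) :
    ∑ j, c j * t j ≤ ∑ m ∈ univ.filter (fun m : Fin n => (m : ℕ) < k), c (σ m) := by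
  rcases Nat.eq_zero_or_pos n with rfl | hn
  · simp
  set F := univ.filter (fun m : Fin n => (m : ℕ) < k) with hF
  have hmin : min k (n - 1) < n := by omega
  set b : ℝ := c (σ ⟨min k (n - 1), hmin⟩) with hb
  have hge : ∀ m ∈ F, b ≤ c (σ m) := by
    intro m hm
    rw [hF, mem_filter] at hm
    have : m ≤ ⟨min k (n - 1), hmin⟩ := by
      rw [Fin.le_def]; simp only [Fin.val_mk]
      have := m.isLt; omega
    exact hσ this
  have hle : ∀ m ∈ Fᶜ, c (σ m) ≤ b := by
    intro m hm
    rw [hF, Finset.mem_compl, mem_filter] at hm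
    simp only [mem_univ, true_and, not_lt] at hm
    have : (⟨min k (n - 1), hmin⟩ : Fin n) ≤ m := by
      rw [Fin.le_def]; simp only [Fin.val_mk]; omega
    exact hσ this
  have hsum1 : ∑ j, c j * t j = ∑ m, c (σ m) * t (σ m) :=
    (Equiv.sum_comp σ (fun j => c j * t j)).symm
  have hsum2 : ∑ m, t (σ m) = (k : ℝ) := by
    rw [Equiv.sum_comp σ t, hts]
  have hsplit : ∑ m, c (σ m) * t (σ m)
      = ∑ m ∈ F, c (σ m) * t (σ m) + ∑ m ∈ Fᶜ, c (σ m) * t (σ m) :=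
    (Finset.sum_add_sum_compl F _).symm
  have hS : ∑ m ∈ F, t (σ m) + ∑ m ∈ Fᶜ, t (σ m) = (k : ℝ) := by
    rw [Finset.sum_add_sum_compl F _, hsum2]
  have hcard : (F.card : ℝ) = (k : ℝ) := by
    rw [hF, card_filter_val_lt n k hk]
  have key : ∑ m ∈ Fᶜ, c (σ m) * t (σ m) ≤ ∑ m ∈ F, c (σ m) * (1 - t (σ m)) := by
    have h1 : ∑ m ∈ Fᶜ, c (σ m) * t (σ m) ≤ ∑ m ∈ Fᶜ, b * t (σ m) := by
      apply Finset.sum_le_sum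
      intro m hm
      exact mul_le_mul_of_nonneg_right (hle m hm) (ht0 _)
    have h2 : ∑ m ∈ F, b * (1 - t (σ m)) ≤ ∑ m ∈ F, c (σ m) * (1 - t (σ m)) := by
      apply Finset.sum_le_sum
      intro m hm
      exact mul_le_mul_of_nonneg_right (hge m hm) (by linarith [ht1 (σ m)])
    have h3 : ∑ m ∈ Fᶜ, b * t (σ m) = ∑ m ∈ F, b * (1 - t (σ m)) := by
      rw [← Finset.mul_sum, ← Finset.mul_sum]
      congr 1
      rw [Finset.sum_sub_distrib, Finset.sum_const, nsmul_eq_mul, mul_one]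
      have := hS
      have := hcard
      linarith
    linarith
  have expand : ∑ m ∈ F, c (σ m) = ∑ m ∈ F, c (σ m) * t (σ m) + ∑ m ∈ F, c (σ m) * (1 - t (σ m)) := by
    rw [← Finset.sum_add_distrib]
    apply Finset.sum_congr rfl
    intro m _
    ring
  rw [hsum1, hsplit, expand]
  linarith

lemma abel_le {n : ℕ} (Z D : ℕ → ℝ) (hZ : ∀ k, k + 1 < n → Z (k + 1) ≤ Z k)
    (hD0 : D 0 = 0) (hDn : D n = 0) (hD : ∀ k, k ≤ n → D k ≤ 0) :
    ∑ i ∈ range n, Z i * (D (i + 1) - D i) ≤ 0 := by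
  rcases Nat.eq_zero_or_pos n with rfl | hn
  · simp
  have aux : ∀ m, 1 ≤ m → m ≤ n →
      ∑ i ∈ range m, Z i * (D (i + 1) - D i) ≤ Z (m - 1) * D m := by
    intro m h1 h2
    induction m with
    | zero => omega
    | succ m ih =>
      rcases Nat.eq_zero_or_pos m with rfl | hm
      · rw [Finset.sum_range_one, hD0]
        simp
      · have hmn : m < n := by omega
        have step := ih hm (le_of_lt hmn)
        rw [Finset.sum_range_succ]
        have hZm : Z m ≤ Z (m - 1) := by
          have := hZ (m - 1) (by omega)
          have hm1 : m - 1 + 1 = m := by omega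
          rwa [hm1] at this
        have hDm : D m ≤ 0 := hD m (le_of_lt hmn)
        have : Z (m - 1) * D m ≤ Z m * D m :=
          mul_le_mul_of_nonpos_right hZm hDm
        have hgoal : m + 1 - 1 = m := by omega
        rw [hgoal]
        linarith
  have := aux n (by omega) le_rfl
  rw [hDn] at this
  simpa using this

lemma filter_eq_map {n k : ℕ} (hk : k ≤ n) :
    univ.filter (fun m : Fin n => (m : ℕ) < k) = Finset.map (Fin.castLEEmb hk) univ := by
  ext m
  simp only [mem_filter, mem_univ, true_and, Finset.mem_map]
  constructor
  · intro h
    exact ⟨⟨m, h⟩, by ext; simp⟩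
  · rintro ⟨a, rfl⟩
    simpa using a.isLt

lemma sum_filter_lt {n k : ℕ} (hk : k ≤ n) (f : Fin n → ℝ) :
    ∑ i ∈ univ.filter (fun i : Fin n => (i : ℕ) < k), f i = ∑ i ∈ range k, ext0 f i := by
  rw [filter_eq_map hk, Finset.sum_map, ← Fin.sum_univ_eq_sum_range (ext0 f) k]
  apply Finset.sum_congr rfl
  intro a _
  rw [ext0_lt f (a.isLt.trans_le hk)]
  rfl

lemma key_bound {n : ℕ} (z c : Fin n → ℝ) (hz : StrictAnti z)
    (A : Matrix (Fin n) (Fin n) ℝ) (hA : IsASM n A)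
    (σ : Equiv.Perm (Fin n)) (hσ : Antitone (c ∘ σ)) :
    ∑ j, c j * (∑ i, z i * A i j) ≤ ∑ i, z i * c (σ i) := by
  obtain ⟨hval, hrow, hcol, _, haltc⟩ := hA
  set s : ℕ → Fin n → ℝ := fun k j => ∑ i ∈ range k, ext0 (fun i => A i j) i with hs
  set T : ℕ → ℝ := fun k => ∑ j, c j * s k j with hT
  set U : ℕ → ℝ := fun k => ∑ m ∈ range k, ext0 (fun m => c (σ m)) m with hU
  set D : ℕ → ℝ := fun k => T k - U k with hD
  set Z : ℕ → ℝ := ext0 z with hZ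
  -- column prefix sums in [0,1]
  have hs01 : ∀ k, k ≤ n → ∀ j, 0 ≤ s k j ∧ s k j ≤ 1 := by
    intro k hk j
    exact prefix_mem (fun i => A i j) (fun i => hval i j) (haltc j) (hcol j) k hk
  -- row sums of prefix
  have hssum : ∀ k, k ≤ n → ∑ j, s k j = (k : ℝ) := by
    intro k hk
    rw [hs]
    rw [Finset.sum_comm]
    have : ∀ i ∈ range k, ∑ j, ext0 (fun i => A i j) i = 1 := by
      intro i hi
      have hin : i < n := lt_of_lt_of_le (Finset.mem_range.mp hi) hk
      have : ∀ j, ext0 (fun i => A i j) i = A ⟨i, hin⟩ j := fun j => ext0_lt _ hin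
      simp_rw [this]
      exact hrow ⟨i, hin⟩
    rw [Finset.sum_congr rfl this]
    simp
  have hD0 : D 0 = 0 := by simp [hD, hT, hU, hs]
  have hsn : ∀ j, s n j = 1 := by
    intro j
    simp only [hs]
    rw [← Fin.sum_univ_eq_sum_range, ← hcol j]
    exact Finset.sum_congr rfl fun i _ => ext0_lt _ i.isLt
  have hDn : D n = 0 := by
    have h1 : T n = ∑ j, c j := by
      rw [hT]
      simp_rw [hsn]
      simp
    have h2 : U n = ∑ j, c j := by
      simp only [hU]
      rw [← Fin.sum_univ_eq_sum_range]
      rw [show (∑ m : Fin n, ext0 (fun m => c (σ m)) ↑m) = ∑ m : Fin n, c (σ m) from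
        Finset.sum_congr rfl fun m _ => by
          rw [ext0_lt _ m.isLt]]
      exact Equiv.sum_comp σ c
    simp only [hD]
    rw [h1, h2, sub_self]
  have hDle : ∀ k, k ≤ n → D k ≤ 0 := by
    intro k hk
    simp only [hD, hT, hU]
    rw [sub_nonpos, ← sum_filter_lt hk (fun m => c (σ m))]
    exact sum_mul_le_topk hk c (s k) σ hσ (fun j => (hs01 k hk j).1)
      (fun j => (hs01 k hk j).2) (hssum k hk)
  have hZanti : ∀ k, k + 1 < n → Z (k + 1) ≤ Z k := by
    intro k hkn
    rw [hZ, ext0_lt z hkn, ext0_lt z (by omega : k < n)]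
    exact (hz (show (⟨k, by omega⟩ : Fin n) < ⟨k + 1, hkn⟩ by
      rw [Fin.lt_def]; simp)).le
  have habel := abel_le Z D hZanti hD0 hDn hDle
  -- rewrite the abel sum
  have hmain : ∑ i ∈ range n, Z i * (D (i + 1) - D i)
      = ∑ i, z i * (∑ j, c j * A i j) - ∑ i, z i * c (σ i) := by
    have hterm : ∀ i ∈ range n, Z i * (D (i + 1) - D i)
        = ext0 (fun i : Fin n => z i * (∑ j, c j * A i j) - z i * c (σ i)) i := by
      intro i hi
      have hin : i < n := Finset.mem_range.mp hi
      have hTd : T (i + 1) - T i = ∑ j, c j * A ⟨i, hin⟩ j := by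
        rw [hT]
        rw [← Finset.sum_sub_distrib]
        apply Finset.sum_congr rfl
        intro j _
        rw [hs]
        simp only
        rw [Finset.sum_range_succ, ext0_lt _ hin]
        ring
      have hUd : U (i + 1) - U i = c (σ ⟨i, hin⟩) := by
        rw [hU]
        simp only
        rw [Finset.sum_range_succ, ext0_lt _ hin]
        ring
      rw [hD, ext0_lt _ hin, hZ, ext0_lt _ hin]
      have : T (i+1) - U (i+1) - (T i - U i) = (T (i+1) - T i) - (U (i+1) - U i) := by ring
      rw [this, hTd, hUd]
      ring
    rw [Finset.sum_congr rfl hterm, ← Fin.sum_univ_eq_sum_range]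
    rw [show (∑ i : Fin n, ext0 (fun i : Fin n => z i * (∑ j, c j * A i j) - z i * c (σ i)) ↑i)
        = ∑ i : Fin n, (z i * (∑ j, c j * A i j) - z i * c (σ i)) from
      Finset.sum_congr rfl fun i _ => ext0_lt _ i.isLt]
    rw [Finset.sum_sub_distrib]
  rw [hmain] at habel
  have hswap : ∑ j, c j * (∑ i, z i * A i j) = ∑ i, z i * (∑ j, c j * A i j) := by
    simp_rw [Finset.mul_sum]
    rw [Finset.sum_comm]
    apply Finset.sum_congr rfl
    intro i _
    apply Finset.sum_congr rfl
    intro j _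
    ring
  linarith [habel, hswap.le, hswap.ge]

lemma phiMap_isLinear (n : ℕ) (z : Fin n → ℝ) : IsLinearMap ℝ (phiMap n z) := by
  constructor
  · intro X Y
    funext j
    simp [phiMap, Matrix.add_apply, mul_add, Finset.sum_add_distrib]
  · intro r X
    funext j
    simp only [phiMap, Matrix.smul_apply, smul_eq_mul, Pi.smul_apply, Finset.mul_sum]
    apply Finset.sum_congr rfl
    intro i _
    ring

lemma isASM_permMatrix (n : ℕ) (ω : Equiv.Perm (Fin n)) : IsASM n (permMatrix n ω) := by
  refine ⟨?_, ?_, ?_, ?_, ?_⟩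
  · intro i j
    unfold permMatrix
    split <;> simp
  · intro i
    simp [permMatrix]
  · intro j
    have : ∀ i : Fin n, (ω i = j) ↔ (i = ω.symm j) := fun i => by
      constructor
      · intro h; simp [← h]
      · intro h; simp [h]
    simp only [permMatrix]
    rw [Finset.sum_congr rfl (fun i _ => by rw [if_congr (this i) rfl rfl])]
    simp
  · intro i j₁ j₂ hlt h1 h2 _
    exfalso
    simp only [permMatrix, ne_eq, ite_eq_right_iff, Classical.not_imp] at h1 h2
    exact absurd (h1.1.symm.trans h2.1) (ne_of_lt hlt)
  · intro j i₁ i₂ hlt h1 h2 _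
    exfalso
    simp only [permMatrix, ne_eq, ite_eq_right_iff, Classical.not_imp] at h1 h2
    exact absurd (ω.injective (h1.1.trans h2.1.symm)) (ne_of_lt hlt)

lemma phiMap_permMatrix (n : ℕ) (z : Fin n → ℝ) (ω : Equiv.Perm (Fin n)) :
    phiMap n z (permMatrix n ω) = z ∘ ⇑ω⁻¹ := by
  funext j
  simp only [phiMap, permMatrix, mul_ite, mul_one, mul_zero, Function.comp_apply]
  have : ∀ i : Fin n, (ω i = j) ↔ (i = ω.symm j) := fun i => by
    constructor
    · intro h; simp [← h]
    · intro h; simp [h]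
  rw [Finset.sum_congr rfl (fun i _ => by rw [if_congr (this i) rfl rfl])]
  simp

/-- For a strictly decreasing vector `z`, the image of the alternating sign
matrix polytope under `φ_z` is the permutohedron `P_z`. -/
theorem phi_image_asmPolytope (n : ℕ) (z : Fin n → ℝ) (hz : StrictAnti z) :
    phiMap n z '' ASMPolytope n = permutohedron n z := by
  have hlin := phiMap_isLinear n z
  rw [ASMPolytope, hlin.image_convexHull]
  apply le_antisymm
  · -- ⊆ : each φ(A) for ASM A lies in the permutohedron
    apply convexHull_min ?_ (convex_convexHull ℝ _)
    rintro w ⟨A, hA, rfl⟩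
    by_contra hnot
    have hfin : ({v : Fin n → ℝ | ∃ ω : Equiv.Perm (Fin n), v = z ∘ ω}).Finite := by
      have : {v : Fin n → ℝ | ∃ ω : Equiv.Perm (Fin n), v = z ∘ ω}
          = Set.range (fun ω : Equiv.Perm (Fin n) => z ∘ ω) := by
        ext v
        simp [Set.mem_setOf_eq, Set.mem_range, eq_comm]
      rw [this]
      exact Set.finite_range _
    obtain ⟨f, u, hfu, hux⟩ := geometric_hahn_banach_closed_point
      (convex_convexHull ℝ _) (hfin.isClosed_convexHull (𝕜 := ℝ)) hnot
    set c : Fin n → ℝ := fun j => f (fun j' => if j = j' then 1 else 0) with hc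
    have hfv : ∀ v : Fin n → ℝ, f v = ∑ j, v j * c j := by
      intro v
      conv_lhs => rw [pi_eq_sum_univ v]
      rw [map_sum]
      apply Finset.sum_congr rfl
      intro j _
      rw [map_smul]
      rfl
    set σ : Equiv.Perm (Fin n) := Tuple.sort (fun i => -c i) with hσdef
    have hσ : Antitone (c ∘ σ) := by
      intro a b hab
      have := Tuple.monotone_sort (fun i => -c i) hab
      simpa using this
    have hb := key_bound z c hz A hA σ hσ
    have hmem : (z ∘ ⇑σ⁻¹) ∈ permutohedron n z :=
      subset_convexHull ℝ _ ⟨σ⁻¹, rfl⟩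
    have h1 : f (phiMap n z A) = ∑ j, c j * (∑ i, z i * A i j) := by
      rw [hfv]
      apply Finset.sum_congr rfl
      intro j _
      rw [phiMap]
      ring
    have h2 : f (z ∘ ⇑σ⁻¹) = ∑ i, z i * c (σ i) := by
      rw [hfv]
      rw [← Equiv.sum_comp σ (fun j => (z ∘ ⇑σ⁻¹) j * c j)]
      apply Finset.sum_congr rfl
      intro i _
      simp
    have h3 := hfu _ hmem
    rw [h2] at h3
    rw [h1] at hux
    linarith
  · -- ⊇ : permutation vectors come from permutation matrices
    apply convexHull_mono
    rintro v ⟨ω, rfl⟩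
    refine ⟨permMatrix n ω⁻¹, isASM_permMatrix n ω⁻¹, ?_⟩
    rw [phiMap_permMatrix, inv_inv]
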